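/- Let β be the arcsine law on [−2,2] and define the operator (𝒰f)(x) = ∫ (f(x) − f(y))/(x − y) β(dy) for C¹ functions f on [−2,2]. Then for every n ≥ 1 and x ∈ [−2,2], (𝒰φ_n)(x) = (1/2)·ψ_{n−1}(x), where φ_n(x) = T_n(x/2) and ψ_n(x) = U_n(x/2). -/

import Mathlib

open MeasureTheory Real Polynomial Polynomial.Chebyshev Finset
open scoped ENNReal NNReal

lemma cheb_div_diff (n : ℕ) (a b : ℝ) :
    (T ℝ n).eval a - (T ℝ n).eval b =
      (a - b) * ((U ℝ ((n : ℤ) - 1)).eval a +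
        2 * ∑ k ∈ Finset.Ico 1 n, (U ℝ ((n : ℤ) - 1 - k)).eval a * (T ℝ (k : ℤ)).eval b) := by
  induction n using Nat.twoStepInduction with
  | zero => simp [U_neg_one]
  | one => simp [T_one]
  | more n ih1 ih2 =>
      -- extend the sum of ih1 (S_n) to Ico 1 (n+1): top term has U_{-1}=0
      have hext : ∑ k ∈ Finset.Ico 1 n, (U ℝ ((n : ℤ) - 1 - k)).eval a * (T ℝ (k : ℤ)).eval b
          = ∑ k ∈ Finset.Ico 1 (n + 1), (U ℝ ((n : ℤ) - 1 - k)).eval a * (T ℝ (k : ℤ)).eval b := by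
        rcases Nat.eq_zero_or_pos n with h | h
        · subst h; simp
        · rw [Finset.sum_Ico_succ_top h]
          have : ((n : ℤ) - 1 - n) = -1 := by ring
          rw [this, U_neg_one]
          simp
      -- the new sum (S_{n+2}) splits off top term and uses U recurrence pointwise
      have hsplit : ∑ k ∈ Finset.Ico 1 (n + 2),
            (U ℝ (((n : ℕ) + 2 : ℤ) - 1 - k)).eval a * (T ℝ (k : ℤ)).eval b
          = (∑ k ∈ Finset.Ico 1 (n + 1),
              (2 * a * (U ℝ (((n : ℕ) + 1 : ℤ) - 1 - k)).eval a
                - (U ℝ ((n : ℤ) - 1 - k)).eval a) * (T ℝ (k : ℤ)).eval b)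
            + (T ℝ ((n : ℤ) + 1)).eval b := by
        rw [Finset.sum_Ico_succ_top (Nat.succ_le_succ (Nat.zero_le n))]
        have htop : (((n : ℕ) + 2 : ℤ) - 1 - ((n + 1 : ℕ) : ℤ)) = 0 := by push_cast; ring
        rw [htop, U_zero]
        congr 1
        · apply Finset.sum_congr rfl
          intro k hk
          have hrec := U_add_two ℝ ((n : ℤ) - 1 - k)
          have h1 : ((n : ℤ) - 1 - k) + 2 = ((n : ℕ) + 2 : ℤ) - 1 - k := by ring
          have h2 : ((n : ℤ) - 1 - k) + 1 = ((n : ℕ) + 1 : ℤ) - 1 - k := by ring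
          rw [h1, h2] at hrec
          rw [hrec]
          simp [eval_sub, eval_mul]
        · push_cast; simp
      have hU : (U ℝ (((n : ℕ) + 2 : ℤ) - 1)).eval a
          = 2 * a * (U ℝ (((n : ℕ) + 1 : ℤ) - 1)).eval a - (U ℝ ((n : ℤ) - 1)).eval a := by
        have hrec := U_add_two ℝ ((n : ℤ) - 1)
        have h1 : ((n : ℤ) - 1) + 2 = ((n : ℕ) + 2 : ℤ) - 1 := by ring
        have h2 : ((n : ℤ) - 1) + 1 = ((n : ℕ) + 1 : ℤ) - 1 := by ring
        rw [h1, h2] at hrec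
        rw [hrec]; simp [eval_sub, eval_mul]
      have hTa := T_add_two ℝ (n : ℤ)
      have hTa' : (T ℝ ((n : ℕ) + 2 : ℤ)).eval a
          = 2 * a * (T ℝ ((n : ℤ) + 1)).eval a - (T ℝ (n : ℤ)).eval a := by
        rw [show ((n : ℕ) + 2 : ℤ) = (n : ℤ) + 2 by push_cast; ring, hTa]
        simp [eval_sub, eval_mul]
      have hTb' : (T ℝ ((n : ℕ) + 2 : ℤ)).eval b
          = 2 * b * (T ℝ ((n : ℤ) + 1)).eval b - (T ℝ (n : ℤ)).eval b := by
        rw [show ((n : ℕ) + 2 : ℤ) = (n : ℤ) + 2 by push_cast; ring, hTa]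
        simp [eval_sub, eval_mul]
      push_cast at *
      rw [hsplit, hU, hTa', hTb']
      rw [hext] at ih1
      set A := (U ℝ ((n : ℤ) - 1)).eval a
      set B := (U ℝ ((n : ℤ) + 1 - 1)).eval a
      set SA := ∑ k ∈ Finset.Ico 1 (n + 1), (U ℝ ((n : ℤ) - 1 - k)).eval a * (T ℝ (k : ℤ)).eval b
      set SB := ∑ k ∈ Finset.Ico 1 (n + 1), (U ℝ ((n : ℤ) + 1 - 1 - k)).eval a * (T ℝ (k : ℤ)).eval b
      have hdist : ∑ k ∈ Finset.Ico 1 (n + 1),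
            (2 * a * (U ℝ ((n : ℤ) + 1 - 1 - k)).eval a - (U ℝ ((n : ℤ) - 1 - k)).eval a)
              * (T ℝ (k : ℤ)).eval b
          = 2 * a * SB - SA := by
        rw [Finset.sum_congr rfl (fun k _ => sub_mul _ _ _), Finset.sum_sub_distrib]
        simp [SA, SB, Finset.mul_sum, mul_assoc]
      rw [hdist]
      linear_combination (2*a)*ih2 - ih1

/-- The arcsine law on `[-2,2]`. -/
noncomputable def arcsineLaw : Measure ℝ :=
  (volume.restrict (Set.Icc (-2 : ℝ) 2)).withDensity
    fun y => ENNReal.ofReal (1 / (π * Real.sqrt (4 - y ^ 2)))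

lemma arcsine_integral (h : ℝ → ℝ) (hm : Measurable h) :
    ∫ y, h y ∂arcsineLaw = ∫ θ in Set.Ioo 0 π, (1 / π) * h (2 * Real.cos θ) := by
  have hdmeas : Measurable fun y : ℝ => (1 / (π * Real.sqrt (4 - y ^ 2))).toNNReal := by
    apply Measurable.real_toNNReal
    exact (measurable_const.div ((measurable_const.mul
      ((continuous_const.sub (continuous_pow 2)).measurable.sqrt))))
  have h1 : ∫ y, h y ∂arcsineLaw
      = ∫ y in Set.Icc (-2 : ℝ) 2, (1 / (π * Real.sqrt (4 - y ^ 2))) * h y := by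
    rw [arcsineLaw]
    have : (fun y : ℝ => ENNReal.ofReal (1 / (π * Real.sqrt (4 - y ^ 2))))
        = fun y : ℝ => ((1 / (π * Real.sqrt (4 - y ^ 2))).toNNReal : ℝ≥0∞) := rfl
    rw [this, integral_withDensity_eq_integral_smul hdmeas]
    apply integral_congr_ae
    filter_upwards with y
    have hnn : 0 ≤ 1 / (π * Real.sqrt (4 - y ^ 2)) := by positivity
    rw [NNReal.smul_def, Real.coe_toNNReal _ hnn, smul_eq_mul]
  rw [h1, integral_Icc_eq_integral_Ioo]
  have himg : (fun θ : ℝ => 2 * Real.cos θ) '' Set.Ioo 0 π = Set.Ioo (-2 : ℝ) 2 := by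
    ext y
    constructor
    · rintro ⟨θ, hθ, rfl⟩
      have h1 : Real.cos θ < Real.cos 0 :=
        Real.strictAntiOn_cos ⟨le_refl 0, Real.pi_pos.le⟩
          ⟨hθ.1.le, hθ.2.le⟩ hθ.1
      have h2 : Real.cos π < Real.cos θ :=
        Real.strictAntiOn_cos ⟨hθ.1.le, hθ.2.le⟩ ⟨Real.pi_pos.le, le_refl π⟩ hθ.2
      rw [Real.cos_zero] at h1; rw [Real.cos_pi] at h2
      dsimp only
      constructor <;> nlinarith
    · rintro ⟨hy1, hy2⟩
      refine ⟨Real.arccos (y / 2), ⟨?_, ?_⟩, ?_⟩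
      · rw [Real.arccos_pos]; linarith
      · rcases (Real.arccos_le_pi (y/2)).lt_or_eq with hlt | heq
        · exact hlt
        · exfalso
          have := Real.cos_arccos (x := y/2) (by linarith) (by linarith)
          rw [heq, Real.cos_pi] at this
          linarith
      · dsimp only
        rw [Real.cos_arccos (by linarith) (by linarith)]; ring
  rw [← himg]
  rw [integral_image_eq_integral_abs_deriv_smul measurableSet_Ioo
    (f' := fun θ => 2 * (-Real.sin θ))
    (fun θ _ => ((Real.hasDerivAt_cos θ).const_mul 2).hasDerivWithinAt)
    (fun θ₁ h1 θ₂ h2 heq => Real.injOn_cos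
      ⟨h1.1.le, h1.2.le⟩ ⟨h2.1.le, h2.2.le⟩ (by linarith))]
  apply setIntegral_congr_fun measurableSet_Ioo
  intro θ hθ
  have hs : 0 < Real.sin θ := Real.sin_pos_of_pos_of_lt_pi hθ.1 hθ.2
  have hsqrt : Real.sqrt (4 - (2 * Real.cos θ) ^ 2) = 2 * Real.sin θ := by
    have : 4 - (2 * Real.cos θ) ^ 2 = (2 * Real.sin θ) ^ 2 := by
      have := Real.sin_sq_add_cos_sq θ; nlinarith
    rw [this, Real.sqrt_sq (by linarith)]
  simp only [smul_eq_mul, hsqrt]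
  rw [abs_of_nonpos (by nlinarith), ]
  have hπ : (π : ℝ) ≠ 0 := Real.pi_ne_zero
  field_simp

lemma integral_cos_nat_mul (k : ℕ) (hk : 1 ≤ k) :
    ∫ θ in (0:ℝ)..π, Real.cos (k * θ) = 0 := by
  have hk0 : (k : ℝ) ≠ 0 := Nat.cast_ne_zero.mpr (by omega)
  have hd : ∀ θ : ℝ, HasDerivAt (fun t => Real.sin (k * t) / k) (Real.cos (k * θ)) θ := by
    intro θ
    have h1 : HasDerivAt (fun t : ℝ => (k : ℝ) * t) k θ := by
      simpa using (hasDerivAt_id θ).const_mul (k : ℝ)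
    have h2 := (Real.hasDerivAt_sin ((k : ℝ) * θ)).comp θ h1
    have h3 := h2.div_const (k : ℝ)
    rw [mul_div_cancel_right₀ _ hk0] at h3
    exact h3
  rw [intervalIntegral.integral_eq_sub_of_hasDerivAt (fun θ _ => hd θ)
    ((Real.continuous_cos.comp (continuous_const.mul continuous_id)).intervalIntegrable 0 π)]
  simp [Real.sin_nat_mul_pi]

/-- The operator `𝒰` applied to `φ_n(x) = T_n(x/2)` yields `(1/2) ψ_{n-1}(x)`:
`∫ (φ_n(x) - φ_n(y))/(x - y) β(dy) = U_{n-1}(x/2)/2` for `n ≥ 1`, `x ∈ [-2,2]`.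
(The integrand at `y = x` is irrelevant since the arcsine law is atomless.) -/
theorem calU_chebyshev_T (n : ℕ) (hn : 1 ≤ n) (x : ℝ) (hx : x ∈ Set.Icc (-2 : ℝ) 2) :
    ∫ y, ((T ℝ n).eval (x / 2) - (T ℝ n).eval (y / 2)) / (x - y) ∂arcsineLaw =
      (1 / 2) * (U ℝ ((n : ℤ) - 1)).eval (x / 2) := by
  have hTc : Continuous fun y : ℝ => (T ℝ (n : ℤ)).eval (y / 2) :=
    (Polynomial.continuous _).comp (continuous_id.div_const 2)
  have hmeas : Measurable fun y : ℝ =>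
      ((T ℝ (n : ℤ)).eval (x / 2) - (T ℝ (n : ℤ)).eval (y / 2)) / (x - y) :=
    ((measurable_const.sub hTc.measurable)).div (measurable_const.sub measurable_id)
  rw [arcsine_integral _ hmeas]
  have hnull : volume {θ : ℝ | θ ∈ Set.Ioo 0 π ∧ 2 * Real.cos θ = x} = 0 := by
    apply Set.Subsingleton.measure_zero
    intro θ₁ h₁ θ₂ h₂
    exact Real.injOn_cos ⟨h₁.1.1.le, h₁.1.2.le⟩ ⟨h₂.1.1.le, h₂.1.2.le⟩
      (by linarith [h₁.2, h₂.2])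
  have hae : (fun θ : ℝ => (1 / π) *
        (((T ℝ (n : ℤ)).eval (x / 2) - (T ℝ (n : ℤ)).eval ((2 * Real.cos θ) / 2))
          / (x - 2 * Real.cos θ)))
      =ᵐ[volume.restrict (Set.Ioo 0 π)]
      (fun θ : ℝ => (1 / π) * ((1 / 2) * ((U ℝ ((n : ℤ) - 1)).eval (x / 2)
        + 2 * ∑ k ∈ Finset.Ico 1 n,
            (U ℝ ((n : ℤ) - 1 - k)).eval (x / 2) * Real.cos (k * θ)))) := by
    rw [Filter.EventuallyEq, ae_restrict_iff' measurableSet_Ioo]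
    have hcompl : ∀ᵐ θ : ℝ, θ ∉ {θ : ℝ | θ ∈ Set.Ioo 0 π ∧ 2 * Real.cos θ = x} :=
      measure_eq_zero_iff_ae_notMem.mp hnull
    filter_upwards [hcompl] with θ hθ hmem
    have hne : 2 * Real.cos θ ≠ x := fun h => hθ ⟨hmem, h⟩
    have hc : x / 2 - Real.cos θ ≠ 0 := fun h => hne (by linarith [sub_eq_zero.mp h])
    have hkey := cheb_div_diff n (x / 2) (Real.cos θ)
    have hsum : ∑ k ∈ Finset.Ico 1 n,
          (U ℝ ((n : ℤ) - 1 - k)).eval (x / 2) * (T ℝ (k : ℤ)).eval (Real.cos θ)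
        = ∑ k ∈ Finset.Ico 1 n,
          (U ℝ ((n : ℤ) - 1 - k)).eval (x / 2) * Real.cos (k * θ) := by
      refine Finset.sum_congr rfl fun k _ => ?_
      rw [T_real_cos]
      norm_cast
    rw [hsum] at hkey
    rw [show (2 * Real.cos θ) / 2 = Real.cos θ by ring, hkey,
      show x - 2 * Real.cos θ = (x / 2 - Real.cos θ) * 2 by ring,
      mul_div_mul_left _ _ hc]
    ring
  rw [integral_congr_ae hae]
  rw [← integral_Ioc_eq_integral_Ioo, ← intervalIntegral.integral_of_le Real.pi_pos.le]
  have hint1 : IntervalIntegrable (fun _ : ℝ => (U ℝ ((n : ℤ) - 1)).eval (x / 2))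
      volume 0 π := intervalIntegrable_const
  have hcont2 : Continuous fun θ : ℝ => 2 * ∑ k ∈ Finset.Ico 1 n,
      (U ℝ ((n : ℤ) - 1 - k)).eval (x / 2) * Real.cos (k * θ) := by
    apply continuous_const.mul
    apply continuous_finset_sum
    intro k _
    exact continuous_const.mul (Real.continuous_cos.comp (continuous_const.mul continuous_id))
  have hsum0 : ∫ θ in (0:ℝ)..π, (2 * ∑ k ∈ Finset.Ico 1 n,
      (U ℝ ((n : ℤ) - 1 - k)).eval (x / 2) * Real.cos (k * θ)) = 0 := by
    rw [intervalIntegral.integral_const_mul,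
      intervalIntegral.integral_finset_sum
        (f := fun (k : ℕ) (θ : ℝ) => (U ℝ ((n : ℤ) - 1 - k)).eval (x / 2) * Real.cos (k * θ))
        (fun k _ =>
        ((by fun_prop : Continuous fun θ : ℝ =>
          (U ℝ ((n : ℤ) - 1 - k)).eval (x / 2) * Real.cos (k * θ))).intervalIntegrable 0 π)]
    rw [Finset.sum_eq_zero, mul_zero]
    intro k hk
    rw [intervalIntegral.integral_const_mul, integral_cos_nat_mul k (Finset.mem_Ico.mp hk).1,
      mul_zero]
  simp only [intervalIntegral.integral_const_mul]
  rw [intervalIntegral.integral_add hint1 (hcont2.intervalIntegrable 0 π), hsum0,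
    intervalIntegral.integral_const]
  have hπ : (π : ℝ) ≠ 0 := Real.pi_ne_zero
  simp only [smul_eq_mul, sub_zero, add_zero]
  field_simp
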